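/- Let q, u be indeterminates and set [x]_{q,u} = (q^x u − q^{-x})/(q − q^{-1}) for x ∈ ℤ, [m]_q = (q^m − q^{-m})/(q − q^{-1}), and q-binomials accordingly. On the ℚ(q,u)-vector space with basis (z_i ⊗ z_j)_{i,j≥0} define operators S and S' by: S(z_i⊗z_j) = Σ_{λ=0}^{j} u^λ (q^{-1}−q)^{-λ} binom_q(i+λ, λ) · q^{λ(1−3λ)/2} q^{λ(j−2i)} / (Π_{s=1}^{λ}[j−i−s]_{q,u}) · z_{i+λ}⊗z_{j−λ}, and S'(z_i⊗z_j) = Σ_{λ=0}^{j} u^λ (q−q^{-1})^{-λ} binom_q(i+λ, λ) · q^{λ(1−3λ)/2} q^{λ(j−2i)} / (Π_{s=1}^{λ}[j−i−λ+1−s]_{q,u}) · z_{i+λ}⊗z_{j−λ}. Then S ∘ S' = id and S' ∘ S = id. -/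

import Mathlib

open Finset Polynomial


/-- The field `ℚ(q, u)`, realized as `ℚ(q)(u)`. -/
abbrev Stmt12K : Type := RatFunc (RatFunc ℚ)

/-- The indeterminate `q` in `ℚ(q,u)`. -/
noncomputable def stmt12q : Stmt12K := RatFunc.C RatFunc.X

/-- The indeterminate `u` in `ℚ(q,u)`. -/
noncomputable def stmt12u : Stmt12K := RatFunc.X

/-- `[x]_{q,u} = (q^x u - q^{-x})/(q - q^{-1})` for `x ∈ ℤ`. -/
noncomputable def stmt12bqu (x : ℤ) : Stmt12K :=
  (stmt12q ^ x * stmt12u - stmt12q ^ (-x)) / (stmt12q - stmt12q⁻¹)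

/-- The quantum integer `[m]_q`. -/
noncomputable def stmt12qnum (m : ℕ) : Stmt12K :=
  (stmt12q ^ m - stmt12q⁻¹ ^ m) / (stmt12q - stmt12q⁻¹)

/-- The quantum factorial `[m]_q!`. -/
noncomputable def stmt12qfact : ℕ → Stmt12K
  | 0 => 1
  | n + 1 => stmt12qfact n * stmt12qnum (n + 1)

/-- The Gaussian `q`-binomial coefficient. -/
noncomputable def stmt12qbinom (m p : ℕ) : Stmt12K :=
  stmt12qfact m / (stmt12qfact p * stmt12qfact (m - p))

lemma s12_hq : stmt12q ≠ 0 := by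
  unfold stmt12q
  exact (_root_.map_ne_zero _).2 RatFunc.X_ne_zero

lemma s12_hu : stmt12u ≠ 0 := RatFunc.X_ne_zero

lemma ratX_pow_ne_one (n : ℕ) (hn : n ≠ 0) : (RatFunc.X : RatFunc ℚ)^n ≠ 1 := by
  intro h
  rw [← RatFunc.algebraMap_X (K := ℚ), ← map_pow, ← map_one (algebraMap ℚ[X] (RatFunc ℚ))] at h
  have h2 := RatFunc.algebraMap_injective (K := ℚ) h
  have := congrArg (Polynomial.eval 0) h2
  simp [hn] at this

lemma s12_qpow_ne_one (t : ℤ) (ht : t ≠ 0) : stmt12q ^ t ≠ 1 := by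
  have key : ∀ n : ℕ, n ≠ 0 → stmt12q ^ (n : ℤ) ≠ 1 := by
    intro n hn h
    rw [zpow_natCast] at h
    unfold stmt12q at h
    rw [← map_pow, ← map_one (RatFunc.C (K := RatFunc ℚ))] at h
    exact ratX_pow_ne_one n hn (RingHom.injective _ h)
  rcases lt_trichotomy t 0 with h | h | h
  · intro he
    apply key (-t).toNat (by omega)
    have : stmt12q ^ (-t) = 1 := by
      rw [zpow_neg, he, inv_one]
    rwa [Int.toNat_of_nonneg (by omega), ] 
  · omega
  · have := key t.toNat (by omega)
    rwa [Int.toNat_of_nonneg h.le] at this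

/-- u is not a "constant" (element of ℚ(q)) -/
lemma s12_u_ne_C (f : RatFunc ℚ) : stmt12u ≠ RatFunc.C f := by
  intro h
  unfold stmt12u at h
  rw [← RatFunc.algebraMap_X (K := RatFunc ℚ), ← RatFunc.algebraMap_C (K := RatFunc ℚ)] at h
  have h2 := RatFunc.algebraMap_injective (K := RatFunc ℚ) h
  have := congrArg (fun p => Polynomial.coeff p 1) h2
  simp at this


lemma s12_hc : stmt12q - stmt12q⁻¹ ≠ 0 := by
  intro h
  have h1 : stmt12q = stmt12q⁻¹ := by linear_combination h
  have h2 : stmt12q ^ (2:ℤ) = 1 := by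
    rw [show (2:ℤ) = 1 + 1 by norm_num, zpow_add₀ s12_hq, zpow_one]
    nth_rewrite 2 [h1]
    exact mul_inv_cancel₀ s12_hq
  exact s12_qpow_ne_one 2 (by norm_num) h2

lemma s12_qzpow_C (x : ℤ) : stmt12q ^ x = RatFunc.C ((RatFunc.X : RatFunc ℚ) ^ x) := by
  obtain ⟨n, rfl | rfl⟩ := x.eq_nat_or_neg
  · rw [zpow_natCast, zpow_natCast]; unfold stmt12q; rw [map_pow]
  · rw [zpow_neg, zpow_neg, zpow_natCast, zpow_natCast, map_inv₀]
    unfold stmt12q; rw [map_pow]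

lemma s12_bqu_ne_zero (x : ℤ) : stmt12bqu x ≠ 0 := by
  unfold stmt12bqu
  apply div_ne_zero _ s12_hc
  intro h
  have hx : stmt12q ^ x ≠ 0 := zpow_ne_zero _ s12_hq
  apply s12_u_ne_C ((RatFunc.X ^ (-x)) * (RatFunc.X ^ x)⁻¹)
  rw [map_mul, map_inv₀, ← s12_qzpow_C, ← s12_qzpow_C]
  simp only [zpow_neg] at h ⊢
  field_simp at h ⊢
  linear_combination h

lemma s12_qnum_ne_zero (m : ℕ) (hm : m ≠ 0) : stmt12qnum m ≠ 0 := by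
  unfold stmt12qnum
  apply div_ne_zero _ s12_hc
  intro h
  have h1 : stmt12q ^ (m:ℤ) = stmt12q ^ (-(m:ℤ)) := by
    rw [zpow_natCast, zpow_neg, ← inv_zpow, zpow_natCast]
    linear_combination h
  have h2 : stmt12q ^ (2 * (m:ℤ)) = 1 := by
    rw [two_mul, zpow_add₀ s12_hq]
    nth_rewrite 1 [h1]
    rw [zpow_neg, inv_mul_cancel₀ (zpow_ne_zero _ s12_hq)]
  exact s12_qpow_ne_one _ (by omega) h2

lemma s12_qfact_ne_zero (m : ℕ) : stmt12qfact m ≠ 0 := by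
  induction m with
  | zero => simp [stmt12qfact]
  | succ n ih => exact mul_ne_zero ih (s12_qnum_ne_zero _ n.succ_ne_zero)

/-- signed quantum integer with integer argument -/
noncomputable def s12zn (t : ℤ) : Stmt12K :=
  (stmt12q ^ t - stmt12q ^ (-t)) / (stmt12q - stmt12q⁻¹)

lemma s12zn_natCast (n : ℕ) : s12zn n = stmt12qnum n := by
  unfold s12zn stmt12qnum
  rw [zpow_natCast, zpow_neg, ← inv_zpow, zpow_natCast]

lemma s12zn_zero : s12zn 0 = 0 := by simp [s12zn]

lemma s12zn_split (a b : ℤ) :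
    s12zn (a + b) = stmt12q ^ (-b) * s12zn a + stmt12q ^ a * s12zn b := by
  have e1 : stmt12q ^ (a+b) = stmt12q ^ a * stmt12q ^ b := zpow_add₀ s12_hq a b
  have e2 : stmt12q ^ (-(a+b)) = stmt12q ^ (-a) * stmt12q ^ (-b) := by
    rw [neg_add]; exact zpow_add₀ s12_hq _ _
  unfold s12zn
  rw [e1, e2, ← mul_div_assoc, ← mul_div_assoc, ← add_div]
  congr 1
  ring

/-- The alternating sum appearing in the key identity. -/
noncomputable def s12H (m : ℕ) (t : ℤ) : Stmt12K :=
  ∑ l ∈ range (m+1), (-1 : Stmt12K)^l * (stmt12qfact l * stmt12qfact (m - l))⁻¹ *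
    stmt12q ^ (t * l)

lemma s12_qfact_succ (n : ℕ) : stmt12qfact (n+1) = stmt12qfact n * stmt12qnum (n+1) := rfl

lemma s12H_rec (m : ℕ) (t : ℤ) :
    stmt12qnum (m+1) * s12H (m+1) t = (1 - stmt12q ^ (t + m)) * s12H m (t - 1) := by
  classical
  have hq := s12_hq
  have hL : stmt12qnum (m+1) * s12H (m+1) t = ∑ l ∈ range (m+2),
      stmt12qnum (m+1) * ((-1 : Stmt12K)^l * (stmt12qfact l * stmt12qfact (m+1 - l))⁻¹ *
        stmt12q ^ (t * l)) := by
    unfold s12H; rw [mul_sum]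
  have split : ∀ l ∈ range (m+2),
      stmt12qnum (m+1) * ((-1 : Stmt12K)^l * (stmt12qfact l * stmt12qfact (m+1 - l))⁻¹ *
        stmt12q ^ (t * l))
      = ((-1 : Stmt12K)^l * (stmt12qfact l * stmt12qfact (m+1 - l))⁻¹ *
          stmt12q ^ (t * l) * stmt12q ^ (-(l:ℤ)) * s12zn ((m:ℤ)+1-l))
        + ((-1 : Stmt12K)^l * (stmt12qfact l * stmt12qfact (m+1 - l))⁻¹ *
          stmt12q ^ (t * l) * stmt12q ^ ((m:ℤ)+1-l) * s12zn l) := by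
    intro l hl
    have hz : s12zn ((m:ℤ)+1) = stmt12q ^ (-(l:ℤ)) * s12zn ((m:ℤ)+1-l)
        + stmt12q ^ ((m:ℤ)+1-l) * s12zn l := by
      have := s12zn_split ((m:ℤ)+1-(l:ℤ)) (l:ℤ)
      rw [sub_add_cancel] at this
      rw [this]
    have hzn : stmt12qnum (m+1) = s12zn ((m:ℤ)+1) := by
      rw [← s12zn_natCast]; push_cast; ring_nf
    rw [hzn, hz]
    ring
  have e1 : ∑ l ∈ range (m+2),
      ((-1 : Stmt12K)^l * (stmt12qfact l * stmt12qfact (m+1 - l))⁻¹ *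
        stmt12q ^ (t * l) * stmt12q ^ (-(l:ℤ)) * s12zn ((m:ℤ)+1-l))
      = s12H m (t-1) := by
    rw [Finset.sum_range_succ]
    have hlast : s12zn ((m:ℤ)+1-((m+1:ℕ):ℤ)) = 0 := by
      push_cast; ring_nf; exact s12zn_zero
    rw [hlast, mul_zero, add_zero]
    unfold s12H
    apply Finset.sum_congr rfl
    intro l hl
    have hlm : l ≤ m := by simpa [Nat.lt_succ_iff] using hl
    have h1 : (m + 1 - l) = (m - l) + 1 := by omega
    have h2 : ((m:ℤ)+1-(l:ℤ)) = (((m - l + 1 : ℕ)):ℤ) := by push_cast; omega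
    rw [h1, s12_qfact_succ, h2, s12zn_natCast]
    have hnum : stmt12qnum (m - l + 1) ≠ 0 := s12_qnum_ne_zero _ (Nat.succ_ne_zero _)
    rw [show ((t-1) * (l:ℤ)) = t * l + (-(l:ℤ)) by ring, zpow_add₀ hq]
    have key : (stmt12qfact l * (stmt12qfact (m-l) * stmt12qnum (m-l+1)))⁻¹ *
        stmt12qnum (m-l+1) = (stmt12qfact l * stmt12qfact (m-l))⁻¹ := by
      rw [mul_inv, mul_inv, mul_assoc, mul_assoc,
        inv_mul_cancel₀ hnum, mul_one, ← mul_inv]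
    linear_combination ((-1:Stmt12K))^l * (stmt12q ^ (t*(l:ℤ)) * stmt12q ^ (-(l:ℤ))) * key
  have e2 : ∑ l ∈ range (m+2),
      ((-1 : Stmt12K)^l * (stmt12qfact l * stmt12qfact (m+1 - l))⁻¹ *
        stmt12q ^ (t * l) * stmt12q ^ ((m:ℤ)+1-l) * s12zn l)
      = -(stmt12q ^ (t + m) * s12H m (t-1)) := by
    rw [Finset.sum_range_succ']
    simp only [Nat.cast_zero, s12zn_zero, mul_zero, add_zero]
    have hR : -(stmt12q ^ (t + (m:ℤ)) * s12H m (t-1)) = ∑ l ∈ range (m+1),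
        -(stmt12q ^ (t + (m:ℤ)) * ((-1 : Stmt12K)^l *
          (stmt12qfact l * stmt12qfact (m - l))⁻¹ * stmt12q ^ ((t-1) * l))) := by
      unfold s12H
      rw [mul_sum, Finset.sum_neg_distrib]
    rw [hR]
    apply Finset.sum_congr rfl
    intro k hk
    have hkm : k ≤ m := by simpa [Nat.lt_succ_iff] using hk
    have h1 : (m + 1 - (k + 1)) = m - k := by omega
    have h2 : ((k+1:ℕ):ℤ) = (k:ℤ) + 1 := by push_cast; ring
    rw [h1, h2, s12_qfact_succ]
    have hzk : s12zn ((k:ℤ)+1) = stmt12qnum (k+1) := by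
      rw [show ((k:ℤ)+1) = ((k+1:ℕ):ℤ) by push_cast; ring, s12zn_natCast]
    rw [hzk]
    have hnum : stmt12qnum (k + 1) ≠ 0 := s12_qnum_ne_zero _ (Nat.succ_ne_zero _)
    have key : (stmt12qfact k * stmt12qnum (k+1) * stmt12qfact (m-k))⁻¹ *
        stmt12qnum (k+1) = (stmt12qfact k * stmt12qfact (m-k))⁻¹ := by
      rw [mul_inv, mul_inv, mul_assoc, mul_assoc, mul_comm (stmt12qfact (m-k))⁻¹,
        ← mul_assoc (stmt12qnum (k+1))⁻¹, inv_mul_cancel₀ hnum, one_mul, ← mul_inv]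
    have hpow : stmt12q ^ (t * ((k:ℤ)+1)) * stmt12q ^ ((m:ℤ)+1-((k:ℤ)+1))
        = stmt12q ^ (t + (m:ℤ)) * stmt12q ^ ((t-1) * (k:ℤ)) := by
      rw [← zpow_add₀ hq, ← zpow_add₀ hq]
      congr 1
      ring
    calc (-1 : Stmt12K)^(k+1) * (stmt12qfact k * stmt12qnum (k+1) * stmt12qfact (m-k))⁻¹ *
          stmt12q ^ (t * ((k:ℤ)+1)) * stmt12q ^ ((m:ℤ)+1-((k:ℤ)+1)) * stmt12qnum (k+1)
        = -((-1 : Stmt12K)^k * ((stmt12qfact k * stmt12qnum (k+1) * stmt12qfact (m-k))⁻¹ *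
            stmt12qnum (k+1)) * (stmt12q ^ (t * ((k:ℤ)+1)) * stmt12q ^ ((m:ℤ)+1-((k:ℤ)+1)))) := by
          rw [pow_succ]; ring
      _ = -(stmt12q ^ (t + (m:ℤ)) * ((-1 : Stmt12K)^k *
            (stmt12qfact k * stmt12qfact (m - k))⁻¹ * stmt12q ^ ((t-1) * (k:ℤ)))) := by
          rw [key, hpow]; ring
  rw [hL, Finset.sum_congr rfl split, Finset.sum_add_distrib, e1, e2]
  ring

lemma s12H_one_zero : s12H 1 0 = 0 := by
  unfold s12H
  rw [show (1:ℕ)+1 = 2 from rfl, Finset.sum_range_succ, Finset.sum_range_one]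
  norm_num
  rw [mul_comm]
  ring

lemma s12_master : ∀ (M : ℕ) (d : ℕ), d ≤ M → s12H (M+1) ((M:ℤ) - 2*d) = 0 := by
  intro M
  induction M with
  | zero =>
    intro d hd
    interval_cases d
    simpa using s12H_one_zero
  | succ M ih =>
    intro d hd
    have hrec := s12H_rec (M+1) (((M:ℤ)+1) - 2*d)
    have hnum : stmt12qnum (M+1+1) ≠ 0 := s12_qnum_ne_zero _ (Nat.succ_ne_zero _)
    have hz : (1 - stmt12q ^ ((((M:ℤ)+1) - 2*d) + ((M+1:ℕ):ℤ))) *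
        s12H (M+1) ((((M:ℤ)+1) - 2*d) - 1) = 0 := by
      rcases Nat.lt_or_ge d (M+1) with hlt | hge
      · have hdM : d ≤ M := by omega
        have : ((((M:ℤ)+1) - 2*d) - 1) = (M:ℤ) - 2*d := by ring
        rw [this, ih d hdM, mul_zero]
      · have hdeq : d = M + 1 := by omega
        subst hdeq
        have : ((((M:ℤ)+1) - 2*((M+1:ℕ):ℤ)) + ((M+1:ℕ):ℤ)) = 0 := by push_cast; ring
        rw [this, zpow_zero, sub_self, zero_mul]
    have h2 : s12H (M+1+1) (((M:ℤ)+1) - 2*d) = 0 := by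
      have := hrec
      rw [hz] at this
      exact (mul_eq_zero.mp this).resolve_left hnum
    have : (((M+1:ℕ)):ℤ) - 2*(d:ℤ) = ((M:ℤ)+1) - 2*d := by push_cast; ring
    rw [this]
    exact h2

lemma s12_bqu_split (y l : ℤ) :
    stmt12bqu (y - l) =
      (-(stmt12q ^ (-y)) / (stmt12q - stmt12q⁻¹)) * stmt12q ^ l
      + (stmt12q ^ y * stmt12u / (stmt12q - stmt12q⁻¹)) * stmt12q ^ (-l) := by
  have e1 : stmt12q ^ (y - l) = stmt12q ^ y * stmt12q ^ (-l) := by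
    rw [sub_eq_add_neg, zpow_add₀ s12_hq]
  have e2 : stmt12q ^ (-(y - l)) = stmt12q ^ (-y) * stmt12q ^ l := by
    rw [show -(y - l) = -y + l by ring, zpow_add₀ s12_hq]
  unfold stmt12bqu
  rw [e1, e2, div_mul_eq_mul_div, div_mul_eq_mul_div, ← add_div]
  congr 1
  ring

lemma s12_pow_card (l : ℕ) (T : Finset ℕ) :
    (stmt12q ^ (l:ℤ)) ^ T.card = stmt12q ^ ((T.card : ℤ) * l) := by
  rw [← zpow_natCast (stmt12q ^ (l:ℤ)) T.card, ← zpow_mul]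
  congr 1
  ring

lemma s12_pow_card' (l : ℕ) (T : Finset ℕ) :
    (stmt12q ^ (-(l:ℤ))) ^ T.card = stmt12q ^ (-((T.card : ℤ) * l)) := by
  rw [← zpow_natCast (stmt12q ^ (-(l:ℤ))) T.card, ← zpow_mul]
  congr 1
  ring

lemma s12_expand (M l : ℕ) (x : ℤ) :
    ∏ s ∈ range M, stmt12bqu (x - 1 - s - l) =
      ∑ T ∈ (range M).powerset,
        ((∏ s ∈ T, (-(stmt12q ^ (-(x - 1 - s))) / (stmt12q - stmt12q⁻¹))) *
         (∏ s ∈ range M \ T, (stmt12q ^ (x - 1 - s) * stmt12u / (stmt12q - stmt12q⁻¹)))) *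
        stmt12q ^ ((2 * (T.card:ℤ) - M) * l) := by
  have h1 : ∀ s ∈ range M, stmt12bqu (x - 1 - s - l) =
      (-(stmt12q ^ (-(x - 1 - s))) / (stmt12q - stmt12q⁻¹)) * stmt12q ^ (l:ℤ)
      + (stmt12q ^ (x - 1 - s) * stmt12u / (stmt12q - stmt12q⁻¹)) * stmt12q ^ (-(l:ℤ)) := by
    intro s _
    exact s12_bqu_split (x - 1 - s) l
  rw [Finset.prod_congr rfl h1, Finset.prod_add]
  apply Finset.sum_congr rfl
  intro T hT
  have hTcard : T.card ≤ M := by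
    have := Finset.card_le_card (Finset.mem_powerset.mp hT)
    simpa using this
  rw [Finset.prod_mul_distrib, Finset.prod_mul_distrib, Finset.prod_const, Finset.prod_const,
    s12_pow_card, s12_pow_card']
  have hcard2 : (range M \ T).card = M - T.card := by
    rw [Finset.card_sdiff_of_subset (Finset.mem_powerset.mp hT), Finset.card_range]
  rw [hcard2]
  have hpow : stmt12q ^ ((T.card : ℤ) * l) * stmt12q ^ (-(((M - T.card : ℕ):ℤ) * l))
      = stmt12q ^ ((2 * (T.card:ℤ) - M) * l) := by
    rw [← zpow_add₀ s12_hq]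
    congr 1
    have : ((M - T.card : ℕ):ℤ) = (M:ℤ) - T.card := by
      push_cast [hTcard]; ring
    rw [this]; ring
  rw [← hpow]
  ring

lemma s12_sumN (m : ℕ) (hm : 1 ≤ m) (x : ℤ) :
    ∑ l ∈ range (m+1), (-1:Stmt12K)^l * (stmt12qfact l * stmt12qfact (m-l))⁻¹ *
      ∏ s ∈ range (m-1), stmt12bqu (x - 1 - s - l) = 0 := by
  obtain ⟨M, rfl⟩ : ∃ M, m = M + 1 := ⟨m - 1, by omega⟩
  simp only [Nat.add_sub_cancel]
  have hexp : ∀ l ∈ range (M+1+1),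
      (-1:Stmt12K)^l * (stmt12qfact l * stmt12qfact (M+1-l))⁻¹ *
        ∏ s ∈ range M, stmt12bqu (x - 1 - s - l)
      = ∑ T ∈ (range M).powerset,
          ((∏ s ∈ T, (-(stmt12q ^ (-(x - 1 - s))) / (stmt12q - stmt12q⁻¹))) *
           (∏ s ∈ range M \ T, (stmt12q ^ (x - 1 - s) * stmt12u / (stmt12q - stmt12q⁻¹)))) *
          ((-1:Stmt12K)^l * (stmt12qfact l * stmt12qfact (M+1-l))⁻¹ *
            stmt12q ^ ((2 * (T.card:ℤ) - M) * l)) := by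
    intro l _
    rw [s12_expand M l x, Finset.mul_sum]
    apply Finset.sum_congr rfl
    intro T _
    ring
  rw [Finset.sum_congr rfl hexp, Finset.sum_comm]
  apply Finset.sum_eq_zero
  intro T hT
  have hTcard : T.card ≤ M := by
    have := Finset.card_le_card (Finset.mem_powerset.mp hT)
    simpa using this
  rw [← Finset.mul_sum]
  have hH : ∑ l ∈ range (M+1+1), ((-1:Stmt12K)^l * (stmt12qfact l * stmt12qfact (M+1-l))⁻¹ *
      stmt12q ^ ((2 * (T.card:ℤ) - M) * l)) = s12H (M+1) (2 * (T.card:ℤ) - M) := rfl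
  rw [hH]
  have : (2 * (T.card:ℤ) - M) = (M:ℤ) - 2*((M - T.card : ℕ):ℤ) := by
    push_cast [hTcard]; ring
  rw [this, s12_master M (M - T.card) (by omega), mul_zero]

noncomputable def s12coA (i j l : ℕ) : Stmt12K :=
  stmt12u ^ l * ((stmt12q⁻¹ - stmt12q) ^ l)⁻¹ * stmt12qbinom (i + l) l *
    stmt12q ^ ((((l : ℤ)) * (1 - 3 * (l : ℤ))) / 2 + (l : ℤ) * ((j : ℤ) - 2 * (i : ℤ))) /
    ∏ s ∈ Finset.range l, stmt12bqu ((j : ℤ) - (i : ℤ) - ((s : ℤ) + 1))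

noncomputable def s12coB (i j l : ℕ) : Stmt12K :=
  stmt12u ^ l * ((stmt12q - stmt12q⁻¹) ^ l)⁻¹ * stmt12qbinom (i + l) l *
    stmt12q ^ ((((l : ℤ)) * (1 - 3 * (l : ℤ))) / 2 + (l : ℤ) * ((j : ℤ) - 2 * (i : ℤ))) /
    ∏ s ∈ Finset.range l, stmt12bqu ((j : ℤ) - (i : ℤ) - (l : ℤ) - (s : ℤ))

noncomputable def s12Cst (i j m : ℕ) : Stmt12K :=
  stmt12u ^ m * (((stmt12q - stmt12q⁻¹)) ^ m)⁻¹ * (stmt12qfact (i+m) * (stmt12qfact i)⁻¹) *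
  stmt12q ^ ((((m : ℤ)) * (1 - 3 * (m : ℤ))) / 2 + (m : ℤ) * ((j : ℤ) - 2 * (i : ℤ))) *
  (∏ t ∈ range (2*m-1), stmt12bqu ((j:ℤ) - (i:ℤ) - 1 - t))⁻¹

lemma s12_even_aux (n : ℤ) : 2 ∣ n * (1 - 3*n) := by
  rcases Int.even_or_odd n with ⟨p, hp⟩ | ⟨p, hp⟩
  · exact ⟨p * (1 - 3*n), by rw [hp]; ring⟩
  · exact ⟨(2*p+1) * (-3*p - 1), by rw [hp]; ring⟩

lemma s12_term (i j l k : ℕ) (hmj : l + k ≤ j) (hm : 1 ≤ l + k) :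
    s12coA i j l * s12coB (i+l) (j-l) k
    = s12Cst i j (l+k) * ((-1:Stmt12K)^l * (stmt12qfact l * stmt12qfact k)⁻¹ *
        ∏ s ∈ range (l+k-1), stmt12bqu ((j:ℤ) - (i:ℤ) - 1 - s - l)) := by
  have hq := s12_hq
  have hc := s12_hc
  -- basic casts
  have cjl : ((j - l : ℕ):ℤ) = (j:ℤ) - l := by omega
  -- names for the four products
  set Pa := ∏ s ∈ Finset.range l, stmt12bqu ((j : ℤ) - (i : ℤ) - ((s : ℤ) + 1)) with hPa
  set N := ∏ s ∈ range (l+k-1), stmt12bqu ((j:ℤ) - (i:ℤ) - 1 - s - l) with hN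
  set F := ∏ t ∈ range (2*(l+k)-1), stmt12bqu ((j:ℤ) - (i:ℤ) - 1 - t) with hF
  set Pb := ∏ s ∈ Finset.range k,
      stmt12bqu (((j - l : ℕ)) - ((i + l : ℕ)) - (k : ℤ) - (s : ℤ)) with hPb
  have hPa0 : Pa ≠ 0 := Finset.prod_ne_zero_iff.mpr (fun s _ => s12_bqu_ne_zero _)
  have hPb0 : Pb ≠ 0 := Finset.prod_ne_zero_iff.mpr (fun s _ => s12_bqu_ne_zero _)
  have hF0 : F ≠ 0 := Finset.prod_ne_zero_iff.mpr (fun s _ => s12_bqu_ne_zero _)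
  -- decomposition of the full window F
  have hsplit : F = Pa * (N * Pb) := by
    rw [hF, show 2*(l+k)-1 = l + ((l+k-1) + k) by omega,
      Finset.prod_range_add, Finset.prod_range_add]
    congr 1
    · rw [hPa]
      apply Finset.prod_congr rfl
      intro s _
      congr 1
      push_cast
      ring
    congr 1
    · rw [hN]
      apply Finset.prod_congr rfl
      intro s _
      congr 1
      push_cast
      ring
    · rw [hPb]
      apply Finset.prod_congr rfl
      intro s _
      congr 1
      push_cast [hmj]
      omega
  -- the exponent identity
  have hexp : stmt12q ^ ((((l : ℤ)) * (1 - 3 * (l : ℤ))) / 2 + (l : ℤ) * ((j : ℤ) - 2 * (i : ℤ)))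
      * stmt12q ^ ((((k : ℤ)) * (1 - 3 * (k : ℤ))) / 2 +
          (k : ℤ) * (((j - l : ℕ):ℤ) - 2 * (((i + l : ℕ)):ℤ)))
      = stmt12q ^ (((((l+k:ℕ) : ℤ)) * (1 - 3 * ((l+k:ℕ) : ℤ))) / 2 +
          ((l+k:ℕ) : ℤ) * ((j : ℤ) - 2 * (i : ℤ))) := by
    rw [← zpow_add₀ hq]
    congr 1
    obtain ⟨a, ha⟩ := s12_even_aux (l:ℤ)
    obtain ⟨b, hb⟩ := s12_even_aux (k:ℤ)
    obtain ⟨c, hcc⟩ := s12_even_aux ((l+k:ℕ):ℤ)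
    rw [ha, hb, hcc, Int.mul_ediv_cancel_left _ two_ne_zero,
      Int.mul_ediv_cancel_left _ two_ne_zero, Int.mul_ediv_cancel_left _ two_ne_zero, cjl]
    have h2 : 2 * (a + (l : ℤ) * ((j : ℤ) - 2 * (i : ℤ)) +
        (b + (k : ℤ) * (((j:ℤ) - l) - 2 * (((i:ℕ):ℤ) + l))))
        = 2 * (c + ((l+k:ℕ) : ℤ) * ((j : ℤ) - 2 * (i : ℤ))) := by
      push_cast at hcc ⊢
      linear_combination hcc - ha - hb
    push_cast at h2 ⊢
    linarith [h2]
  -- the binomial coefficients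
  have hB : stmt12qbinom (i + l) l * stmt12qbinom ((i+l) + k) k
      = (stmt12qfact (i+(l+k)) * (stmt12qfact i)⁻¹) * (stmt12qfact l * stmt12qfact k)⁻¹ := by
    unfold stmt12qbinom
    rw [show (i + l) - l = i by omega, show ((i+l) + k) - k = i + l by omega,
      show (i+l) + k = i + (l+k) by omega]
    have h1 := s12_qfact_ne_zero i
    have h2 := s12_qfact_ne_zero l
    have h3 := s12_qfact_ne_zero k
    have h4 := s12_qfact_ne_zero (i+l)
    field_simp
  -- the sign
  have hsgn : (((stmt12q⁻¹ - stmt12q) ^ l)⁻¹ : Stmt12K)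
      = (-1:Stmt12K)^l * ((stmt12q - stmt12q⁻¹) ^ l)⁻¹ := by
    rw [show stmt12q⁻¹ - stmt12q = -(stmt12q - stmt12q⁻¹) by ring, neg_pow,
      mul_inv, ← inv_pow, inv_neg, inv_one]
  -- the powers of u and c
  have hu : stmt12u ^ l * stmt12u ^ k = stmt12u ^ (l+k) := by rw [pow_add]
  have hcp : ((stmt12q - stmt12q⁻¹) ^ l)⁻¹ * ((stmt12q - stmt12q⁻¹) ^ k)⁻¹
      = (((stmt12q - stmt12q⁻¹)) ^ (l+k))⁻¹ := by rw [pow_add, mul_inv]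
  -- inverse products
  have hP : Pa⁻¹ * Pb⁻¹ = F⁻¹ * N := by
    rw [hsplit]
    have hN0 : N ≠ 0 := Finset.prod_ne_zero_iff.mpr (fun s _ => s12_bqu_ne_zero _)
    field_simp
  -- now assemble
  unfold s12coA s12coB s12Cst
  rw [div_eq_mul_inv, div_eq_mul_inv]
  calc (stmt12u ^ l * ((stmt12q⁻¹ - stmt12q) ^ l)⁻¹ * stmt12qbinom (i + l) l *
        stmt12q ^ ((((l : ℤ)) * (1 - 3 * (l : ℤ))) / 2 + (l : ℤ) * ((j : ℤ) - 2 * (i : ℤ))) * Pa⁻¹)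
      * (stmt12u ^ k * ((stmt12q - stmt12q⁻¹) ^ k)⁻¹ * stmt12qbinom ((i+l) + k) k *
        stmt12q ^ ((((k : ℤ)) * (1 - 3 * (k : ℤ))) / 2 +
          (k : ℤ) * (((j - l : ℕ):ℤ) - 2 * (((i + l : ℕ)):ℤ))) * Pb⁻¹)
      = (stmt12u ^ l * stmt12u ^ k) * ((-1:Stmt12K)^l *
          (((stmt12q - stmt12q⁻¹) ^ l)⁻¹ * ((stmt12q - stmt12q⁻¹) ^ k)⁻¹)) *
        (stmt12qbinom (i + l) l * stmt12qbinom ((i+l) + k) k) *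
        (stmt12q ^ ((((l : ℤ)) * (1 - 3 * (l : ℤ))) / 2 + (l : ℤ) * ((j : ℤ) - 2 * (i : ℤ))) *
         stmt12q ^ ((((k : ℤ)) * (1 - 3 * (k : ℤ))) / 2 +
          (k : ℤ) * (((j - l : ℕ):ℤ) - 2 * (((i + l : ℕ)):ℤ)))) *
        (Pa⁻¹ * Pb⁻¹) := by
        rw [hsgn]; ring
    _ = stmt12u ^ (l+k) * (((stmt12q - stmt12q⁻¹)) ^ (l+k))⁻¹ *
        (stmt12qfact (i+(l+k)) * (stmt12qfact i)⁻¹) *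
        stmt12q ^ (((((l+k:ℕ) : ℤ)) * (1 - 3 * ((l+k:ℕ) : ℤ))) / 2 +
          ((l+k:ℕ) : ℤ) * ((j : ℤ) - 2 * (i : ℤ))) * F⁻¹ *
        ((-1:Stmt12K)^l * (stmt12qfact l * stmt12qfact k)⁻¹ * N) := by
        rw [hu, hcp, hB, hexp, hP]; ring

lemma s12_coA_zero (i j : ℕ) : s12coA i j 0 = 1 := by
  unfold s12coA stmt12qbinom
  simp [stmt12qfact, s12_qfact_ne_zero i]

lemma s12_coB_zero (i j : ℕ) : s12coB i j 0 = 1 := by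
  unfold s12coB stmt12qbinom
  simp [stmt12qfact, s12_qfact_ne_zero i]

lemma s12_key (i j m : ℕ) (hm : m ≤ j) :
    ∑ l ∈ range (m+1), s12coA i j l * s12coB (i+l) (j-l) (m-l)
    = if m = 0 then 1 else 0 := by
  rcases Nat.eq_zero_or_pos m with h0 | hpos
  · subst h0
    simp [Finset.sum_range_one, s12_coA_zero, s12_coB_zero]
  · have hterm : ∀ l ∈ range (m+1), s12coA i j l * s12coB (i+l) (j-l) (m-l)
        = s12Cst i j m * ((-1:Stmt12K)^l * (stmt12qfact l * stmt12qfact (m-l))⁻¹ *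
            ∏ s ∈ range (m-1), stmt12bqu ((j:ℤ) - (i:ℤ) - 1 - s - l)) := by
      intro l hl
      have hlm : l ≤ m := by simpa [Nat.lt_succ_iff] using hl
      have hk : l + (m - l) = m := by omega
      have ht := s12_term i j l (m-l) (by omega) (by omega)
      rwa [hk] at ht
    rw [Finset.sum_congr rfl hterm, ← Finset.mul_sum,
      s12_sumN m (by omega) ((j:ℤ) - (i:ℤ)), mul_zero]
    simp [Nat.pos_iff_ne_zero.mp hpos]

lemma s12_tri {M : Type*} [AddCommMonoid M] (N : ℕ) (f : ℕ → ℕ → M) :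
    ∑ l ∈ range (N+1), ∑ k ∈ range (N - l + 1), f l k
    = ∑ m ∈ range (N+1), ∑ l ∈ range (m+1), f l (m - l) := by
  rw [Finset.sum_sigma', Finset.sum_sigma']
  refine Finset.sum_nbij' (fun p => (⟨p.1 + p.2, p.1⟩ : Σ _ : ℕ, ℕ))
    (fun p => (⟨p.2, p.1 - p.2⟩ : Σ _ : ℕ, ℕ)) ?_ ?_ ?_ ?_ ?_
  · intro a ha
    simp only [Finset.mem_sigma, Finset.mem_range, Nat.lt_succ_iff] at ha ⊢
    omega
  · intro a ha
    simp only [Finset.mem_sigma, Finset.mem_range, Nat.lt_succ_iff] at ha ⊢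
    omega
  · intro a ha
    simp only [Finset.mem_sigma, Finset.mem_range, Nat.lt_succ_iff] at ha
    simp
  · intro a ha
    simp only [Finset.mem_sigma, Finset.mem_range, Nat.lt_succ_iff] at ha
    have : a.2 + (a.1 - a.2) = a.1 := by omega
    simp [this]
  · intro a ha
    simp only [Finset.mem_sigma, Finset.mem_range, Nat.lt_succ_iff] at ha
    simp


/-- Basis vector `z_i ⊗ z_j` of the vector space with basis `(z_i ⊗ z_j)_{i,j≥0}`. -/
noncomputable def stmt12zb (p : ℕ × ℕ) : (ℕ × ℕ) →₀ Stmt12K := Finsupp.single p 1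

/-- the explicit triangular operators `S` (the stable map
`S_{V,V}(u)` for `V = L⁻_{1,a}` over `U_q(ŝl₂)`) and `S'` (the claimed formula
for its inverse) are mutually inverse. -/
theorem stmt12 (S S' : Module.End Stmt12K ((ℕ × ℕ) →₀ Stmt12K))
    (hS : ∀ i j : ℕ, S (stmt12zb (i, j)) =
      ∑ l ∈ Finset.range (j + 1),
        (stmt12u ^ l * ((stmt12q⁻¹ - stmt12q) ^ l)⁻¹ * stmt12qbinom (i + l) l *
            stmt12q ^ ((((l : ℤ)) * (1 - 3 * (l : ℤ))) / 2 + (l : ℤ) * ((j : ℤ) - 2 * (i : ℤ))) /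
            ∏ s ∈ Finset.range l, stmt12bqu ((j : ℤ) - (i : ℤ) - ((s : ℤ) + 1))) •
          stmt12zb (i + l, j - l))
    (hS' : ∀ i j : ℕ, S' (stmt12zb (i, j)) =
      ∑ l ∈ Finset.range (j + 1),
        (stmt12u ^ l * ((stmt12q - stmt12q⁻¹) ^ l)⁻¹ * stmt12qbinom (i + l) l *
            stmt12q ^ ((((l : ℤ)) * (1 - 3 * (l : ℤ))) / 2 + (l : ℤ) * ((j : ℤ) - 2 * (i : ℤ))) /
            ∏ s ∈ Finset.range l, stmt12bqu ((j : ℤ) - (i : ℤ) - (l : ℤ) - (s : ℤ))) •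
          stmt12zb (i + l, j - l)) :
    S * S' = 1 ∧ S' * S = 1 := by
  classical
  -- restate the hypotheses via the coefficient abbreviations
  have hSA : ∀ i j : ℕ, S (stmt12zb (i, j)) =
      ∑ l ∈ Finset.range (j + 1), s12coA i j l • stmt12zb (i + l, j - l) := by
    intro i j; rw [hS i j]; rfl
  have hSB : ∀ i j : ℕ, S' (stmt12zb (i, j)) =
      ∑ l ∈ Finset.range (j + 1), s12coB i j l • stmt12zb (i + l, j - l) := by
    intro i j; rw [hS' i j]; rfl
  -- the main computation : S' ∘ S is the identity on basis vectors
  have main : ∀ i j : ℕ, S' (S (stmt12zb (i, j))) = stmt12zb (i, j) := by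
    intro i j
    rw [hSA i j, map_sum]
    have step : ∀ l ∈ range (j+1), S' (s12coA i j l • stmt12zb (i + l, j - l))
        = ∑ k ∈ range ((j - l) + 1),
            (s12coA i j l * s12coB (i+l) (j-l) k) • stmt12zb ((i+l) + k, (j-l) - k) := by
      intro l hl
      rw [map_smul, hSB (i+l) (j-l), Finset.smul_sum]
      simp only [smul_smul]
    rw [Finset.sum_congr rfl step,
      s12_tri j (fun l k => (s12coA i j l * s12coB (i+l) (j-l) k) •
        stmt12zb ((i+l) + k, (j-l) - k))]
    have inner : ∀ m ∈ range (j+1),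
        (∑ l ∈ range (m+1), (s12coA i j l * s12coB (i+l) (j-l) (m-l)) •
          stmt12zb ((i+l) + (m-l), (j-l) - (m-l)))
        = (if m = 0 then (1:Stmt12K) else 0) • stmt12zb (i+m, j-m) := by
      intro m hm
      have hmj : m ≤ j := by simpa [Nat.lt_succ_iff] using hm
      have hz : ∀ l ∈ range (m+1),
          (s12coA i j l * s12coB (i+l) (j-l) (m-l)) •
            stmt12zb ((i+l) + (m-l), (j-l) - (m-l))
          = (s12coA i j l * s12coB (i+l) (j-l) (m-l)) • stmt12zb (i+m, j-m) := by
        intro l hl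
        have hlm : l ≤ m := by simpa [Nat.lt_succ_iff] using hl
        have e1 : (i+l) + (m-l) = i + m := by omega
        have e2 : (j-l) - (m-l) = j - m := by omega
        rw [e1, e2]
      rw [Finset.sum_congr rfl hz, ← Finset.sum_smul, s12_key i j m hmj]
    rw [Finset.sum_congr rfl inner, Finset.sum_eq_single 0]
    · simp
    · intro m _ hm0
      simp [hm0]
    · intro h
      simp at h
  -- hence `S' * S = 1`
  have hS'S : S' * S = 1 := by
    apply Finsupp.lhom_ext
    intro p b
    have hb : Finsupp.single p b = b • stmt12zb p := by
      simp [stmt12zb, Finsupp.smul_single]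
    rw [hb, map_smul, map_smul, Module.End.mul_apply]
    rw [show (stmt12zb p : (ℕ × ℕ) →₀ Stmt12K) = stmt12zb (p.1, p.2) by rfl, main p.1 p.2]
    rfl
  refine ⟨?_, hS'S⟩
  -- the finite-dimensional block argument for the other composition
  have mainrev : ∀ i j : ℕ, S (S' (stmt12zb (i, j))) = stmt12zb (i, j) := by
    intro i j
    set n := i + j with hn
    set G : Set ((ℕ × ℕ) →₀ Stmt12K) := stmt12zb '' {p : ℕ × ℕ | p.1 + p.2 = n} with hG
    set Vn : Submodule Stmt12K ((ℕ × ℕ) →₀ Stmt12K) := Submodule.span Stmt12K G with hVn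
    have hGfin : G.Finite := by
      apply Set.Finite.image
      apply Set.Finite.subset (Set.finite_Icc ((0,0) : ℕ × ℕ) (n, n))
      intro p hp
      simp only [Set.mem_setOf_eq] at hp
      simp only [Set.mem_Icc, Prod.le_def]
      omega
    haveI : FiniteDimensional Stmt12K Vn := FiniteDimensional.span_of_finite _ hGfin
    have hmem : ∀ p : ℕ × ℕ, p.1 + p.2 = n → stmt12zb p ∈ Vn :=
      fun p hp => Submodule.subset_span ⟨p, hp, rfl⟩
    have hSV : ∀ v ∈ Vn, S v ∈ Vn := by
      have : Submodule.map S Vn ≤ Vn := by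
        rw [hVn, Submodule.map_span_le]
        rintro w ⟨p, hp, rfl⟩
        rw [show (stmt12zb p : (ℕ × ℕ) →₀ Stmt12K) = stmt12zb (p.1, p.2) by rfl, hSA p.1 p.2]
        apply Submodule.sum_mem
        intro l hl
        have hlj : l ≤ p.2 := by simpa [Nat.lt_succ_iff] using hl
        apply Submodule.smul_mem
        exact hmem (p.1 + l, p.2 - l) (by simp only [Set.mem_setOf_eq] at hp ⊢; omega)
      intro v hv
      exact this (Submodule.mem_map_of_mem hv)
    have hS'V : ∀ v ∈ Vn, S' v ∈ Vn := by
      have : Submodule.map S' Vn ≤ Vn := by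
        rw [hVn, Submodule.map_span_le]
        rintro w ⟨p, hp, rfl⟩
        rw [show (stmt12zb p : (ℕ × ℕ) →₀ Stmt12K) = stmt12zb (p.1, p.2) by rfl, hSB p.1 p.2]
        apply Submodule.sum_mem
        intro l hl
        have hlj : l ≤ p.2 := by simpa [Nat.lt_succ_iff] using hl
        apply Submodule.smul_mem
        exact hmem (p.1 + l, p.2 - l) (by simp only [Set.mem_setOf_eq] at hp ⊢; omega)
      intro v hv
      exact this (Submodule.mem_map_of_mem hv)
    set fr : Vn →ₗ[Stmt12K] Vn := LinearMap.restrict S hSV with hfr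
    set gr : Vn →ₗ[Stmt12K] Vn := LinearMap.restrict S' hS'V with hgr
    have hgf : ∀ w : Vn, gr (fr w) = w := by
      intro w
      apply Subtype.ext
      have : S' (S (w : (ℕ × ℕ) →₀ Stmt12K)) = w := by
        have := congrArg (fun T : Module.End Stmt12K ((ℕ × ℕ) →₀ Stmt12K) => T (w : (ℕ × ℕ) →₀ Stmt12K)) hS'S
        simpa [Module.End.mul_apply] using this
      simpa [hfr, hgr, LinearMap.restrict_apply] using this
    have hfinj : Function.Injective fr := by
      intro a b hab
      have := congrArg gr hab
      rwa [hgf, hgf] at this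
    have hfsurj : Function.Surjective fr := LinearMap.surjective_of_injective (K := Stmt12K) (V := Vn) (f := fr) hfinj
    have hfg : ∀ v : Vn, fr (gr v) = v := by
      intro v
      obtain ⟨w, rfl⟩ := hfsurj v
      rw [hgf]
    have hzbmem : stmt12zb (i, j) ∈ Vn := hmem (i, j) rfl
    have := hfg ⟨stmt12zb (i, j), hzbmem⟩
    have h2 := congrArg (Subtype.val) this
    simpa [hfr, hgr, LinearMap.restrict_apply] using h2
  apply Finsupp.lhom_ext
  intro p b
  have hb : Finsupp.single p b = b • stmt12zb p := by
    simp [stmt12zb, Finsupp.smul_single]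
  rw [hb, map_smul, map_smul, Module.End.mul_apply]
  rw [show (stmt12zb p : (ℕ × ℕ) →₀ Stmt12K) = stmt12zb (p.1, p.2) by rfl, mainrev p.1 p.2]
  rfl
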